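/- The map F ↦ (P₊F, P₋F) is a bijection from the set of decomposable real antisymmetric 4×4 matrices of unit norm (the Grassmannian G(2,4) of oriented 2-planes in ℝ⁴) onto S²₊ × S²₋, where S²₊ is the set of self-dual matrices of squared norm 1/2 and S²₋ is the set of anti-self-dual matrices of squared norm 1/2. In particular, for any self-dual a with ‖a‖² = 1/2 and anti-self-dual b with ‖b‖² = 1/2, the sum a + b is decomposable of unit norm. -/

import Mathlib

set_option maxRecDepth 20000
set_option linter.unreachableTactic false
set_option linter.unusedTactic false

open Matrix

/-- The Hodge star operator on (antisymmetric) real 4×4 matrices, determined by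
`(⋆F)₁₂ = F₃₄`, `(⋆F)₁₃ = −F₂₄`, `(⋆F)₁₄ = F₂₃`, `(⋆F)₂₃ = F₁₄`,
`(⋆F)₂₄ = −F₁₃`, `(⋆F)₃₄ = F₁₂` (indices here are 1-based). -/
def hodge (F : Matrix (Fin 4) (Fin 4) ℝ) : Matrix (Fin 4) (Fin 4) ℝ :=
  !![0, F 2 3, -(F 1 3), F 1 2;
     -(F 2 3), 0, F 0 3, -(F 0 2);
     F 1 3, -(F 0 3), 0, F 0 1;
     -(F 1 2), F 0 2, -(F 0 1), 0]

/-- The inner product `⟨F,G⟩ = Σ_{i<j} F_{ij} G_{ij}` on 4×4 matrices. -/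
def inner2 (F G : Matrix (Fin 4) (Fin 4) ℝ) : ℝ :=
  ∑ i : Fin 4, ∑ j : Fin 4, if i < j then F i j * G i j else 0

/-- The projection `P₊ = ½(1 + ⋆)` onto self-dual matrices. -/
noncomputable def Pplus (F : Matrix (Fin 4) (Fin 4) ℝ) : Matrix (Fin 4) (Fin 4) ℝ :=
  (1/2 : ℝ) • (F + hodge F)

/-- The projection `P₋ = ½(1 − ⋆)` onto anti-self-dual matrices. -/
noncomputable def Pminus (F : Matrix (Fin 4) (Fin 4) ℝ) : Matrix (Fin 4) (Fin 4) ℝ :=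
  (1/2 : ℝ) • (F - hodge F)

/-- The Grassmannian `G(2,4)` of oriented 2-planes in ℝ⁴, realized as the set of
decomposable antisymmetric 4×4 matrices of unit norm. -/
def G24 : Set (Matrix (Fin 4) (Fin 4) ℝ) :=
  {F | (∃ u v : Fin 4 → ℝ, F = Matrix.vecMulVec u v - Matrix.vecMulVec v u) ∧
    inner2 F F = 1}

/-- The sphere `S²₊` of self-dual matrices of squared norm `1/2`. -/
def S2plus : Set (Matrix (Fin 4) (Fin 4) ℝ) :=
  {a | aᵀ = -a ∧ hodge a = a ∧ inner2 a a = 1/2}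

/-- The sphere `S²₋` of anti-self-dual matrices of squared norm `1/2`. -/
def S2minus : Set (Matrix (Fin 4) (Fin 4) ℝ) :=
  {b | bᵀ = -b ∧ hodge b = -b ∧ inner2 b b = 1/2}

/-- Generic antisymmetric 4×4 matrix built from its six upper entries. -/
def asm (p q r s t w : ℝ) : Matrix (Fin 4) (Fin 4) ℝ :=
  !![0,p,q,r; -p,0,s,t; -q,-s,0,w; -r,-t,-w,0]

lemma hodge_asm (p q r s t w : ℝ) : hodge (asm p q r s t w) = asm w (-t) s r (-q) p := by
  ext i j; fin_cases i <;> fin_cases j <;> simp [hodge, asm]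

lemma asm_add (p q r s t w p' q' r' s' t' w' : ℝ) :
    asm p q r s t w + asm p' q' r' s' t' w' = asm (p+p') (q+q') (r+r') (s+s') (t+t') (w+w') := by
  ext i j; fin_cases i <;> fin_cases j <;> simp [asm] <;> ring

lemma inner2_asm (p q r s t w p' q' r' s' t' w' : ℝ) :
    inner2 (asm p q r s t w) (asm p' q' r' s' t' w') = p*p'+q*q'+r*r'+s*s'+t*t'+w*w' := by
  simp only [inner2, Fin.sum_univ_four]
  norm_num [asm, Fin.lt_def, Fin.ext_iff, show ((3:Fin 4):ℕ) = 3 from rfl,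
    show ((2:Fin 4):ℕ) = 2 from rfl, show ((1:Fin 4):ℕ) = 1 from rfl,
    show ((0:Fin 4):ℕ) = 0 from rfl]
  simp [Matrix.cons_val]
  ring

lemma asm_transpose (p q r s t w : ℝ) : (asm p q r s t w)ᵀ = -asm p q r s t w := by
  ext i j; fin_cases i <;> fin_cases j <;> simp [asm]

lemma asm_neg (p q r s t w : ℝ) :
    -asm p q r s t w = asm (-p) (-q) (-r) (-s) (-t) (-w) := by
  ext i j; fin_cases i <;> fin_cases j <;> simp [asm] <;> ring

lemma anti_eq (F : Matrix (Fin 4) (Fin 4) ℝ) (h : Fᵀ = -F) :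
    F = asm (F 0 1) (F 0 2) (F 0 3) (F 1 2) (F 1 3) (F 2 3) := by
  have h' : ∀ i j, F j i = -(F i j) := by
    intro i j
    have := congrFun (congrFun h i) j
    simpa using this
  ext i j; fin_cases i <;> fin_cases j <;>
    simp [asm] <;>
    first
      | (have := h' 0 0; linarith)
      | (have := h' 1 1; linarith)
      | (have := h' 2 2; linarith)
      | (have := h' 3 3; linarith)
      | (have := h' 0 1; linarith)
      | (have := h' 0 2; linarith)
      | (have := h' 0 3; linarith)
      | (have := h' 1 2; linarith)
      | (have := h' 1 3; linarith)
      | (have := h' 2 3; linarith)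

lemma vmv (u v : Fin 4 → ℝ) : vecMulVec u v - vecMulVec v u =
    asm (u 0*v 1 - v 0*u 1) (u 0*v 2 - v 0*u 2) (u 0*v 3 - v 0*u 3)
        (u 1*v 2 - v 1*u 2) (u 1*v 3 - v 1*u 3) (u 2*v 3 - v 2*u 3) := by
  ext i j; fin_cases i <;> fin_cases j <;> simp [asm, vecMulVec] <;> ring

lemma Pplus_asm (p q r s t w : ℝ) :
    Pplus (asm p q r s t w) =
      asm ((p+w)/2) ((q-t)/2) ((r+s)/2) ((r+s)/2) (-((q-t)/2)) ((p+w)/2) := by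
  rw [Pplus, hodge_asm, asm_add]
  ext i j; fin_cases i <;> fin_cases j <;> simp [asm] <;> ring

lemma Pminus_asm (p q r s t w : ℝ) :
    Pminus (asm p q r s t w) =
      asm ((p-w)/2) ((q+t)/2) ((r-s)/2) (-((r-s)/2)) ((q+t)/2) (-((p-w)/2)) := by
  rw [Pminus, hodge_asm, sub_eq_add_neg, asm_neg, asm_add]
  ext i j; fin_cases i <;> fin_cases j <;> simp [asm] <;> ring

set_option maxHeartbeats 1000000 in
lemma decomp_asm (p q r s t w : ℝ) (hPf : p*w - q*t + r*s = 0)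
    (hne : p ≠ 0 ∨ q ≠ 0 ∨ r ≠ 0 ∨ s ≠ 0 ∨ t ≠ 0 ∨ w ≠ 0) :
    ∃ u v : Fin 4 → ℝ, asm p q r s t w = vecMulVec u v - vecMulVec v u := by
  rcases hne with hp | hq | hr | hs | ht | hw
  · refine ⟨![0, -(p/p), -(q/p), -(r/p)], ![p, 0, -s, -t], ?_⟩
    ext i j; fin_cases i <;> fin_cases j <;>
      simp [asm, vecMulVec] <;> field_simp <;>
      first
        | ring1
        | linear_combination hPf | linear_combination -hPf
        | linear_combination 2*hPf | linear_combination (-2)*hPf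
        | linear_combination p*hPf | linear_combination (-p)*hPf
        | linear_combination q*hPf | linear_combination (-q)*hPf
        | linear_combination r*hPf | linear_combination (-r)*hPf
        | linear_combination s*hPf | linear_combination (-s)*hPf
        | linear_combination t*hPf | linear_combination (-t)*hPf
        | linear_combination w*hPf | linear_combination (-w)*hPf
  · refine ⟨![0, -(p/q), -(q/q), -(r/q)], ![q, s, 0, -w], ?_⟩
    ext i j; fin_cases i <;> fin_cases j <;>
      simp [asm, vecMulVec] <;> field_simp <;>
      first
        | ring1
        | linear_combination hPf | linear_combination -hPf
        | linear_combination 2*hPf | linear_combination (-2)*hPf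
        | linear_combination p*hPf | linear_combination (-p)*hPf
        | linear_combination q*hPf | linear_combination (-q)*hPf
        | linear_combination r*hPf | linear_combination (-r)*hPf
        | linear_combination s*hPf | linear_combination (-s)*hPf
        | linear_combination t*hPf | linear_combination (-t)*hPf
        | linear_combination w*hPf | linear_combination (-w)*hPf
  · refine ⟨![0, -(p/r), -(q/r), -(r/r)], ![r, t, w, 0], ?_⟩
    ext i j; fin_cases i <;> fin_cases j <;>
      simp [asm, vecMulVec] <;> field_simp <;>
      first
        | ring1
        | linear_combination hPf | linear_combination -hPf
        | linear_combination 2*hPf | linear_combination (-2)*hPf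
        | linear_combination p*hPf | linear_combination (-p)*hPf
        | linear_combination q*hPf | linear_combination (-q)*hPf
        | linear_combination r*hPf | linear_combination (-r)*hPf
        | linear_combination s*hPf | linear_combination (-s)*hPf
        | linear_combination t*hPf | linear_combination (-t)*hPf
        | linear_combination w*hPf | linear_combination (-w)*hPf
  · refine ⟨![p/s, 0, -(s/s), -(t/s)], ![q, s, 0, -w], ?_⟩
    ext i j; fin_cases i <;> fin_cases j <;>
      simp [asm, vecMulVec] <;> field_simp <;>
      first
        | ring1
        | linear_combination hPf | linear_combination -hPf
        | linear_combination 2*hPf | linear_combination (-2)*hPf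
        | linear_combination p*hPf | linear_combination (-p)*hPf
        | linear_combination q*hPf | linear_combination (-q)*hPf
        | linear_combination r*hPf | linear_combination (-r)*hPf
        | linear_combination s*hPf | linear_combination (-s)*hPf
        | linear_combination t*hPf | linear_combination (-t)*hPf
        | linear_combination w*hPf | linear_combination (-w)*hPf
  · refine ⟨![p/t, 0, -(s/t), -(t/t)], ![r, t, w, 0], ?_⟩
    ext i j; fin_cases i <;> fin_cases j <;>
      simp [asm, vecMulVec] <;> field_simp <;>
      first
        | ring1
        | linear_combination hPf | linear_combination -hPf
        | linear_combination 2*hPf | linear_combination (-2)*hPf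
        | linear_combination p*hPf | linear_combination (-p)*hPf
        | linear_combination q*hPf | linear_combination (-q)*hPf
        | linear_combination r*hPf | linear_combination (-r)*hPf
        | linear_combination s*hPf | linear_combination (-s)*hPf
        | linear_combination t*hPf | linear_combination (-t)*hPf
        | linear_combination w*hPf | linear_combination (-w)*hPf
  · refine ⟨![q/w, s/w, 0, -(w/w)], ![r, t, w, 0], ?_⟩
    ext i j; fin_cases i <;> fin_cases j <;>
      simp [asm, vecMulVec] <;> field_simp <;>
      first
        | ring1
        | linear_combination hPf | linear_combination -hPf
        | linear_combination 2*hPf | linear_combination (-2)*hPf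
        | linear_combination p*hPf | linear_combination (-p)*hPf
        | linear_combination q*hPf | linear_combination (-q)*hPf
        | linear_combination r*hPf | linear_combination (-r)*hPf
        | linear_combination s*hPf | linear_combination (-s)*hPf
        | linear_combination t*hPf | linear_combination (-t)*hPf
        | linear_combination w*hPf | linear_combination (-w)*hPf

lemma selfdual_mem (p q r : ℝ) (h : p^2+q^2+r^2 = 1/4) : asm p q r r (-q) p ∈ S2plus := by
  refine ⟨asm_transpose _ _ _ _ _ _, ?_, ?_⟩
  · rw [hodge_asm, neg_neg]
  · rw [inner2_asm]; nlinarith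

lemma antiselfdual_mem (x y z : ℝ) (h : x^2+y^2+z^2 = 1/4) :
    asm x y z (-z) y (-x) ∈ S2minus := by
  refine ⟨asm_transpose _ _ _ _ _ _, ?_, ?_⟩
  · rw [hodge_asm, asm_neg, neg_neg, neg_neg]
  · rw [inner2_asm]; nlinarith

lemma S2plus_param (a : Matrix (Fin 4) (Fin 4) ℝ) (ha : a ∈ S2plus) :
    ∃ p q r : ℝ, a = asm p q r r (-q) p ∧ p^2+q^2+r^2 = 1/4 := by
  obtain ⟨haT, haH, haN⟩ := ha
  have hA := anti_eq a haT
  rw [hA, hodge_asm] at haH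
  have hcomp : ∀ i j, asm (a 2 3) (-(a 1 3)) (a 1 2) (a 0 3) (-(a 0 2)) (a 0 1) i j
      = asm (a 0 1) (a 0 2) (a 0 3) (a 1 2) (a 1 3) (a 2 3) i j :=
    fun i j => congrFun (congrFun haH i) j
  have e1 : a 2 3 = a 0 1 := by have := hcomp 0 1; simpa [asm] using this
  have e2 : a 1 3 = -(a 0 2) := by have := hcomp 0 2; simp [asm] at this; linarith
  have e3 : a 1 2 = a 0 3 := by have := hcomp 0 3; simpa [asm] using this
  rw [hA, inner2_asm] at haN
  rw [e1, e2, e3] at haN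
  refine ⟨a 0 1, a 0 2, a 0 3, ?_, by nlinarith⟩
  conv_lhs => rw [hA]
  rw [e1, e2, e3]

lemma S2minus_param (b : Matrix (Fin 4) (Fin 4) ℝ) (hb : b ∈ S2minus) :
    ∃ x y z : ℝ, b = asm x y z (-z) y (-x) ∧ x^2+y^2+z^2 = 1/4 := by
  obtain ⟨hbT, hbH, hbN⟩ := hb
  have hB := anti_eq b hbT
  rw [hB, hodge_asm, asm_neg] at hbH
  have hcomp : ∀ i j, asm (b 2 3) (-(b 1 3)) (b 1 2) (b 0 3) (-(b 0 2)) (b 0 1) i j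
      = asm (-(b 0 1)) (-(b 0 2)) (-(b 0 3)) (-(b 1 2)) (-(b 1 3)) (-(b 2 3)) i j :=
    fun i j => congrFun (congrFun hbH i) j
  have e1 : b 2 3 = -(b 0 1) := by have := hcomp 0 1; simpa [asm] using this
  have e2 : b 1 3 = b 0 2 := by have := hcomp 0 2; simp [asm] at this; linarith
  have e3 : b 1 2 = -(b 0 3) := by have := hcomp 0 3; simpa [asm] using this
  rw [hB, inner2_asm] at hbN
  rw [e1, e2, e3] at hbN
  refine ⟨b 0 1, b 0 2, b 0 3, ?_, by nlinarith⟩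
  conv_lhs => rw [hB]
  rw [e1, e2, e3]

lemma hodge_add (X Y : Matrix (Fin 4) (Fin 4) ℝ) : hodge (X + Y) = hodge X + hodge Y := by
  ext i j; fin_cases i <;> fin_cases j <;> simp [hodge] <;> ring

lemma sum_mem_G24 {a b : Matrix (Fin 4) (Fin 4) ℝ} (ha : a ∈ S2plus) (hb : b ∈ S2minus) :
    a + b ∈ G24 := by
  obtain ⟨p, q, r, hA, hN1⟩ := S2plus_param a ha
  obtain ⟨x, y, z, hB, hN2⟩ := S2minus_param b hb
  rw [hA, hB, asm_add]
  constructor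
  · apply decomp_asm
    · linear_combination hN1 - hN2
    · by_contra h
      push_neg at h
      obtain ⟨h1, h2, h3, h4, h5, h6⟩ := h
      have hp : p = 0 := by linarith
      have hq : q = 0 := by linarith
      have hr : r = 0 := by linarith
      rw [hp, hq, hr] at hN1; norm_num at hN1
  · rw [inner2_asm]; linear_combination 2*hN1 + 2*hN2

theorem stmt_3 :
    Set.BijOn (fun F => (Pplus F, Pminus F)) G24 (S2plus ×ˢ S2minus) ∧
    ∀ a ∈ S2plus, ∀ b ∈ S2minus, a + b ∈ G24 := by
  have key : ∀ X : Matrix (Fin 4) (Fin 4) ℝ, Pplus X + Pminus X = X := by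
    intro X; rw [Pplus, Pminus]; module
  refine ⟨⟨?_, ?_, ?_⟩, fun a ha b hb => sum_mem_G24 ha hb⟩
  · -- MapsTo
    rintro F ⟨⟨u, v, hF⟩, hN⟩
    have hT : Fᵀ = -F := by rw [hF, vmv]; exact asm_transpose _ _ _ _ _ _
    have hA := anti_eq F hT
    have hPf : F 0 1 * F 2 3 - F 0 2 * F 1 3 + F 0 3 * F 1 2 = 0 := by
      rw [hF]; simp [vecMulVec, Matrix.sub_apply]; ring
    rw [hA, inner2_asm] at hN
    constructor
    · show Pplus F ∈ S2plus
      rw [hA, Pplus_asm]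
      exact selfdual_mem _ _ _ (by linear_combination (1/4)*hN + (1/2)*hPf)
    · show Pminus F ∈ S2minus
      rw [hA, Pminus_asm]
      exact antiselfdual_mem _ _ _ (by linear_combination (1/4)*hN - (1/2)*hPf)
  · -- InjOn
    intro F _ G _ h
    simp only [Prod.mk.injEq] at h
    calc F = Pplus F + Pminus F := (key F).symm
    _ = Pplus G + Pminus G := by rw [h.1, h.2]
    _ = G := key G
  · -- SurjOn
    rintro ⟨a, b⟩ hab
    rw [Set.mem_prod] at hab
    obtain ⟨ha, hb⟩ := hab
    refine ⟨a + b, sum_mem_G24 ha hb, ?_⟩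
    have h1 : Pplus (a + b) = a := by
      rw [Pplus, hodge_add, ha.2.1, hb.2.1]; module
    have h2 : Pminus (a + b) = b := by
      rw [Pminus, hodge_add, ha.2.1, hb.2.1]; module
    simp only [h1, h2]
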